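/- Let D ⊆ ℂ^N be a convex domain that contains a complex affine line. Then there exists a holomorphic map f : D → D with no fixed point (f(z) ≠ z for all z ∈ D) but possessing a 2-periodic point (there is z_0 ∈ D with f(f(z_0)) = z_0); in particular, the sequence of iterates {f^{∘k}} is not compactly divergent although f has no fixed point. -/

import Mathlib

/-- A convex domain: a nonempty open convex subset. -/
def IsConvexDomain {N : ℕ} (D : Set (Fin N → ℂ)) : Prop :=
  IsOpen D ∧ Convex ℝ D ∧ D.Nonempty

/-- `S` contains a complex affine line `{p + ζ • v : ζ ∈ ℂ}` with `v ≠ 0`. -/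
def ContainsComplexLine {E : Type*} [AddCommGroup E] [Module ℂ E] (S : Set E) : Prop :=
  ∃ p v : E, v ≠ 0 ∧ ∀ ζ : ℂ, p + ζ • v ∈ S

/-- An open convex set containing a complex affine line is invariant under
translations in the direction of the line. -/
lemma line_translate {N : ℕ} {D : Set (Fin N → ℂ)} (hopen : IsOpen D) (hconv : Convex ℝ D)
    {p v : Fin N → ℂ} (hp : ∀ ζ : ℂ, p + ζ • v ∈ D) :
    ∀ z ∈ D, ∀ ζ : ℂ, z + ζ • v ∈ D := by
  have coe_smul : ∀ (r : ℝ) (x : Fin N → ℂ), r • x = (r:ℂ) • x := by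
    intro r x; funext j; simp [Complex.real_smul]
  intro z hz ζ
  -- find small t > 0 with z + t • (z - p) ∈ D
  have hcont : ContinuousAt (fun t : ℝ => z + t • (z - p)) 0 := by fun_prop
  have hev : ∀ᶠ t : ℝ in nhds 0, z + t • (z - p) ∈ D := by
    apply hcont.eventually_mem
    simpa using hopen.mem_nhds hz
  obtain ⟨δ, hδ0, hδ⟩ := Metric.eventually_nhds_iff.mp hev
  set t : ℝ := min (δ/2) 1 with ht
  have ht0 : 0 < t := lt_min (by linarith) one_pos
  have ht1 : t ≤ 1 := min_le_right _ _
  have hB : z + t • (z - p) ∈ D := by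
    apply hδ
    simp only [dist_zero_right, Real.norm_eq_abs, abs_of_pos ht0]
    calc t ≤ δ/2 := min_le_left _ _
      _ < δ := by linarith
  have hq : p + ((2/(t:ℂ)) * ζ) • v ∈ D := hp _
  have hA : (1-t) • z + t • (p + ((2/(t:ℂ)) * ζ) • v) ∈ D :=
    hconv hz hq (by linarith) ht0.le (by ring)
  have key : (1/2 : ℝ) • ((1-t) • z + t • (p + ((2/(t:ℂ)) * ζ) • v)) +
      (1/2 : ℝ) • (z + t • (z - p)) = z + ζ • v := by
    rw [coe_smul, coe_smul, coe_smul, coe_smul, coe_smul]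
    have htc : (t:ℂ) ≠ 0 := by exact_mod_cast ht0.ne'
    push_cast
    match_scalars <;> field_simp <;> ring
  have := hconv hA hB (show (0:ℝ) ≤ 1/2 by norm_num) (show (0:ℝ) ≤ 1/2 by norm_num)
    (by norm_num)
  rwa [key] at this

/-- implication (11) ⇒ (4) of Theorem 1.1: if a convex domain
`D ⊆ ℂ^N` contains a complex affine line, then there is a holomorphic self-map `f` of
`D` with no fixed point but with a 2-periodic point; in particular the sequence of
iterates `{f^∘k}` is not compactly divergent although `f` has no fixed point. -/
theorem fixed_point_free_not_compactly_divergent {N : ℕ} (D : Set (Fin N → ℂ))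
    (hD : IsConvexDomain D) (hline : ContainsComplexLine D) :
    ∃ f : (Fin N → ℂ) → (Fin N → ℂ),
      DifferentiableOn ℂ f D ∧ Set.MapsTo f D D ∧
      (∀ z ∈ D, f z ≠ z) ∧
      (∃ z₀ ∈ D, f (f z₀) = z₀) ∧
      ¬ (∀ K₁ K₂ : Set (Fin N → ℂ), K₁ ⊆ D → K₂ ⊆ D → IsCompact K₁ → IsCompact K₂ →
          {k : ℕ | ((f^[k]) '' K₁ ∩ K₂).Nonempty}.Finite) := by
  obtain ⟨hopen, hconv, -⟩ := hD
  obtain ⟨p, v, hv, hp⟩ := hline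
  obtain ⟨i, hvi⟩ : ∃ i, v i ≠ 0 := Function.ne_iff.mp hv
  -- the map
  set f : (Fin N → ℂ) → (Fin N → ℂ) := fun z => z + Complex.exp (z i / v i) • v with hf
  have htrans := line_translate hopen hconv hp
  have hdiff : Differentiable ℂ f := by fun_prop
  have hmaps : Set.MapsTo f D D := fun z hz => htrans z hz _
  have hnofix : ∀ z ∈ D, f z ≠ z := by
    intro z _ h
    have : Complex.exp (z i / v i) • v = 0 := by
      have h' : z + Complex.exp (z i / v i) • v = z + 0 := by
        simpa [hf] using h
      exact add_left_cancel h'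
    rcases smul_eq_zero.mp this with h1 | h2
    · exact Complex.exp_ne_zero _ h1
    · exact hv h2
  -- the 2-periodic point
  have hπI : ((Real.pi : ℂ) * Complex.I) ≠ 0 := by
    simp [Complex.I_ne_zero, Real.pi_ne_zero]
  set w₀ : ℂ := Complex.log ((Real.pi : ℂ) * Complex.I) with hw₀
  have hexpw₀ : Complex.exp w₀ = (Real.pi : ℂ) * Complex.I := Complex.exp_log hπI
  set z₀ : Fin N → ℂ := p + (w₀ - p i / v i) • v with hz₀
  have hz₀D : z₀ ∈ D := hp _
  have hz₀i : z₀ i / v i = w₀ := by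
    simp only [hz₀, Pi.add_apply, Pi.smul_apply, smul_eq_mul]
    field_simp
    ring
  have hfz₀ : f z₀ = z₀ + ((Real.pi : ℂ) * Complex.I) • v := by
    simp [hf, hz₀i, hexpw₀]
  have hfz₀i : (f z₀) i / v i = w₀ + (Real.pi : ℂ) * Complex.I := by
    rw [hfz₀]
    simp only [Pi.add_apply, Pi.smul_apply, smul_eq_mul]
    rw [add_div, mul_div_assoc, div_self hvi, mul_one, hz₀i]
  have hper : f (f z₀) = z₀ := by
    have hexp2 : Complex.exp (w₀ + (Real.pi : ℂ) * Complex.I)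
        = -((Real.pi : ℂ) * Complex.I) := by
      rw [Complex.exp_add, hexpw₀, Complex.exp_pi_mul_I]; ring
    calc f (f z₀) = f z₀ + Complex.exp ((f z₀) i / v i) • v := rfl
      _ = z₀ + ((Real.pi : ℂ) * Complex.I) • v + (-((Real.pi : ℂ) * Complex.I)) • v := by
          rw [hfz₀i, hexp2, hfz₀]
      _ = z₀ := by module
  have hfz₀D : f z₀ ∈ D := hmaps hz₀D
  refine ⟨f, hdiff.differentiableOn, hmaps, hnofix, ⟨z₀, hz₀D, hper⟩, ?_⟩
  -- no compact divergence: the orbit of z₀ is {z₀, f z₀}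
  intro hcd
  set K : Set (Fin N → ℂ) := {z₀, f z₀} with hK
  have hKD : K ⊆ D := by
    intro x hx; rcases hx with h | h
    · exact h ▸ hz₀D
    · exact h ▸ hfz₀D
  have hKc : IsCompact K := ((Set.finite_singleton _).insert _).isCompact
  have horbit : ∀ k, f^[k] z₀ ∈ K := by
    intro k
    induction k with
    | zero => left; rfl
    | succ n ih =>
        rw [Function.iterate_succ_apply']
        rcases ih with h | h
        · right; rw [h]; rfl
        · left; rw [h, hper]
  have hall : {k : ℕ | ((f^[k]) '' K ∩ K).Nonempty} = Set.univ := by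
    ext k
    simp only [Set.mem_setOf_eq, Set.mem_univ, iff_true]
    exact ⟨f^[k] z₀, ⟨z₀, Or.inl rfl, rfl⟩, horbit k⟩
  have := hcd K K hKD hKD hKc hKc
  rw [hall] at this
  exact Set.infinite_univ this
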